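/- Let σ be a non-erasing substitution on the finite alphabet A = {0,…,d}, and let u = (u_k)_{k∈ℕ} be a sequence of infinite words over A such that σ(u_{k+1}) = u_k for every k (i.e., for every k and n, the image under σ of the length-n prefix of u_{k+1} is a prefix of u_k). Then u_0 is a periodic point of σ: there exists an integer p ≥ 1 such that σ^p(u_0) = u_0, i.e., for every n, the image under σ^p of the length-n prefix of u_0 is a prefix of u_0. -/

import Mathlib

/-- `l` is a prefix of the infinite word `w`. -/
def IsPrefixOf {d : ℕ} (l : List (Fin (d + 1))) (w : ℕ → Fin (d + 1)) : Prop :=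
  l = (List.range l.length).map w

section PeriodicPointAux

variable {d : ℕ}

/-- one substitution step on finite words -/
def Sb (σ : Fin (d + 1) → List (Fin (d + 1))) : List (Fin (d + 1)) → List (Fin (d + 1)) :=
  fun w => w.flatMap σ

lemma Sb_append (σ : Fin (d + 1) → List (Fin (d + 1))) (w₁ w₂ : List (Fin (d + 1))) :
    Sb σ (w₁ ++ w₂) = Sb σ w₁ ++ Sb σ w₂ := List.flatMap_append ..

lemma Sb_singleton (σ : Fin (d + 1) → List (Fin (d + 1))) (c : Fin (d + 1)) :
    Sb σ [c] = σ c := by simp [Sb]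

lemma Sb_iter_append (σ : Fin (d + 1) → List (Fin (d + 1))) (j : ℕ) :
    ∀ w₁ w₂ : List (Fin (d + 1)), (Sb σ)^[j] (w₁ ++ w₂) = (Sb σ)^[j] w₁ ++ (Sb σ)^[j] w₂ := by
  induction j with
  | zero => intro w₁ w₂; simp
  | succ j ih =>
    intro w₁ w₂
    simp only [Function.iterate_succ_apply, Sb_append, ih]

lemma Sb_iter_nil (σ : Fin (d + 1) → List (Fin (d + 1))) (j : ℕ) :
    (Sb σ)^[j] ([] : List (Fin (d + 1))) = [] := by
  induction j with
  | zero => rfl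
  | succ j ih => simp [Function.iterate_succ_apply, Sb, ih]

variable {σ : Fin (d + 1) → List (Fin (d + 1))}

lemma length_le_Sb (hσ : ∀ a, σ a ≠ []) (w : List (Fin (d + 1))) :
    w.length ≤ (Sb σ w).length := by
  induction w with
  | nil => simp [Sb]
  | cons a t ih =>
    have : Sb σ (a :: t) = σ a ++ Sb σ t := by simp [Sb]
    rw [this, List.length_append, List.length_cons]
    have ha : 1 ≤ (σ a).length := List.length_pos_iff.mpr (hσ a)
    omega

lemma length_le_iter (hσ : ∀ a, σ a ≠ []) (j : ℕ) (w : List (Fin (d + 1))) :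
    w.length ≤ ((Sb σ)^[j] w).length := by
  induction j with
  | zero => simp
  | succ j ih =>
    calc w.length ≤ ((Sb σ)^[j] w).length := ih
    _ ≤ (Sb σ ((Sb σ)^[j] w)).length := length_le_Sb hσ _
    _ = ((Sb σ)^[j+1] w).length := by rw [Function.iterate_succ_apply']

lemma iter_len_mono (hσ : ∀ a, σ a ≠ []) (w : List (Fin (d + 1))) {j j' : ℕ} (h : j ≤ j') :
    ((Sb σ)^[j] w).length ≤ ((Sb σ)^[j'] w).length := by
  obtain ⟨t, rfl⟩ := Nat.exists_eq_add_of_le h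
  have h2 := Function.iterate_add_apply (Sb σ) t j w
  rw [Nat.add_comm t j] at h2
  rw [h2]
  exact length_le_iter hσ t _

lemma infix_of_mem (j : ℕ) {c : Fin (d + 1)} {w : List (Fin (d + 1))} (hc : c ∈ w) :
    (Sb σ)^[j] [c] <:+: (Sb σ)^[j] w := by
  obtain ⟨s, t, rfl⟩ := List.append_of_mem hc
  refine ⟨(Sb σ)^[j] s, (Sb σ)^[j] t, ?_⟩
  have : s ++ c :: t = s ++ ([c] ++ t) := by simp
  rw [this, Sb_iter_append, Sb_iter_append, List.append_assoc]

lemma mem_letter (j : ℕ) : ∀ {w : List (Fin (d + 1))} {x : Fin (d + 1)},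
    x ∈ (Sb σ)^[j] w → ∃ c ∈ w, x ∈ (Sb σ)^[j] [c] := by
  induction j with
  | zero => intro w x hx; exact ⟨x, by simpa using hx, by simp⟩
  | succ j ih =>
    intro w x hx
    rw [Function.iterate_succ_apply] at hx
    obtain ⟨c', hc', hx'⟩ := ih hx
    obtain ⟨c, hc, hcc⟩ := List.mem_flatMap.mp hc'
    refine ⟨c, hc, ?_⟩
    have hinf : (Sb σ)^[j] [c'] <:+: (Sb σ)^[j] (σ c) := infix_of_mem j hcc
    have : (Sb σ)^[j] (σ c) = (Sb σ)^[j+1] [c] := by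
      rw [Function.iterate_succ_apply, Sb_singleton]
    rw [this] at hinf
    exact hinf.subset hx'

/-- `c` has unbounded images under iterates of the substitution. -/
def grows (σ : Fin (d + 1) → List (Fin (d + 1))) (c : Fin (d + 1)) : Prop :=
  ∀ C, ∃ n, C ≤ ((Sb σ)^[n] [c]).length

lemma grow_of_mem (hσ : ∀ a, σ a ≠ []) (j : ℕ) {x c : Fin (d + 1)}
    (hc : x ∈ (Sb σ)^[j] [c]) (hx : grows σ x) : grows σ c := by
  intro C
  obtain ⟨n, hn⟩ := hx C
  refine ⟨n + j, ?_⟩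
  have h2 := Function.iterate_add_apply (Sb σ) n j [c]
  rw [h2]
  have hinf := (infix_of_mem (σ := σ) n hc).length_le
  omega

lemma exists_grow_letter (hσ : ∀ a, σ a ≠ []) :
    ∀ w : List (Fin (d + 1)), (∀ C, ∃ n, C ≤ ((Sb σ)^[n] w).length) → ∃ x ∈ w, grows σ x := by
  intro w
  induction w with
  | nil =>
    intro hw
    obtain ⟨n, hn⟩ := hw 1
    rw [Sb_iter_nil] at hn
    simp at hn
  | cons c t ih =>
    intro hw
    by_cases hc : grows σ c
    · exact ⟨c, by simp, hc⟩
    by_cases ht : ∀ C, ∃ n, C ≤ ((Sb σ)^[n] t).length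
    · obtain ⟨x, hx, hgx⟩ := ih ht
      exact ⟨x, by simp [hx], hgx⟩
    rw [grows] at hc
    push_neg at hc ht
    obtain ⟨C₁, hC₁⟩ := hc
    obtain ⟨C₂, hC₂⟩ := ht
    exfalso
    obtain ⟨n, hn⟩ := hw (C₁ + C₂)
    have hsplit : (Sb σ)^[n] (c :: t) = (Sb σ)^[n] [c] ++ (Sb σ)^[n] t := by
      rw [show (c :: t : List (Fin (d+1))) = [c] ++ t from rfl, Sb_iter_append]
    rw [hsplit, List.length_append] at hn
    have := hC₁ n
    have := hC₂ n
    omega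

section Words

variable (u : ℕ → ℕ → Fin (d + 1))

/-- length-`n` prefix of the infinite word `u k`. -/
def pre (k n : ℕ) : List (Fin (d + 1)) := (List.range n).map (u k)

variable {u}

lemma pre_length (k n : ℕ) : (pre u k n).length = n := by simp [pre]

lemma pre_getD (k : ℕ) {i n : ℕ} (h : i < n) : (pre u k n).getD i 0 = u k i := by
  rw [pre, List.getD_eq_getElem?_getD]
  simp [h]

lemma mem_pre_iff {x : Fin (d + 1)} {k n : ℕ} : x ∈ pre u k n ↔ ∃ i < n, u k i = x := by
  simp [pre]

lemma pre_succ (k n : ℕ) : pre u k (n + 1) = pre u k n ++ [u k n] := by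
  rw [pre, pre, List.range_succ, List.map_append]
  rfl

end Words


section Chain

variable {u : ℕ → ℕ → Fin (d + 1)}
variable (hσ : ∀ a, σ a ≠ [])
variable (hu : ∀ k n : ℕ, IsPrefixOf (((List.range n).map (u (k + 1))).flatMap σ) (u k))

include hu

lemma step_pre (k n : ℕ) :
    Sb σ (pre u (k + 1) n) = pre u k ((Sb σ (pre u (k + 1) n)).length) := hu k n

lemma chain_pre (j k : ℕ) : ∀ n, (Sb σ)^[j] (pre u (k + j) n)
    = pre u k (((Sb σ)^[j] (pre u (k + j) n)).length) := by
  induction j with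
  | zero => intro n; simp [pre_length]
  | succ j ih =>
    intro n
    have e1 : (Sb σ)^[j+1] (pre u (k + (j+1)) n) = (Sb σ)^[j] (Sb σ (pre u ((k + j) + 1) n)) := by
      rw [Function.iterate_succ_apply]
      ring_nf
    rw [e1, step_pre hu (k + j) n]
    have := ih ((Sb σ (pre u (k + j + 1) n)).length)
    rw [this, pre_length]

include hσ

lemma chain_pre' (j k n : ℕ) : ∃ M, n ≤ M ∧ (Sb σ)^[j] (pre u (k + j) n) = pre u k M := by
  refine ⟨((Sb σ)^[j] (pre u (k + j) n)).length, ?_, chain_pre hu j k n⟩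
  have := length_le_iter hσ j (pre u (k + j) n)
  rwa [pre_length] at this

lemma letter_up (j k i : ℕ) : ∃ i' ≤ i, u k i ∈ (Sb σ)^[j] [u (k + j) i'] := by
  obtain ⟨M, hM, e⟩ := chain_pre' hσ hu j k (i + 1)
  have hmem : u k i ∈ (Sb σ)^[j] (pre u (k + j) (i + 1)) := by
    rw [e]
    exact mem_pre_iff.mpr ⟨i, by omega, rfl⟩
  obtain ⟨c, hc, hxc⟩ := mem_letter j hmem
  obtain ⟨i', hi', rfl⟩ := mem_pre_iff.mp hc
  exact ⟨i', by omega, hxc⟩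

lemma determine (j k k' : ℕ) (h : ∀ i, u (k + j) i = u (k' + j) i) : ∀ i, u k i = u k' i := by
  intro i
  have hp : pre u (k + j) (i + 1) = pre u (k' + j) (i + 1) := by
    unfold pre
    exact List.map_congr_left fun a _ => h a
  obtain ⟨M, hM, e⟩ := chain_pre' hσ hu j k (i + 1)
  obtain ⟨M', hM', e'⟩ := chain_pre' hσ hu j k' (i + 1)
  rw [hp] at e
  rw [e] at e'
  have hMM : M = M' := by
    have := congrArg List.length e'
    rwa [pre_length, pre_length] at this
  subst hMM
  calc u k i = (pre u k M).getD i 0 := (pre_getD k (by omega)).symm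
    _ = (pre u k' M).getD i 0 := by rw [e']
    _ = u k' i := pre_getD k' (by omega)

end Chain

/-- backward-orbit pigeonhole: a sequence in a fintype satisfying `b k = f (b (k+1))`
is periodic with period `(card X)!`. -/
lemma pigeonP {X : Type*} [Fintype X] (f : X → X) (b : ℕ → X)
    (hb : ∀ k, b k = f (b (k + 1))) (k : ℕ) : b k = b (k + (Fintype.card X).factorial) := by
  have back : ∀ t r, b r = f^[t] (b (r + t)) := by
    intro t
    induction t with
    | zero => intro r; simp
    | succ t ih =>
      intro r
      rw [ih r, hb (r + t), Function.iterate_succ_apply]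
      ring_nf
  set c := Fintype.card X with hc
  have period_upto : ∀ Kb : ℕ, ∃ q, 1 ≤ q ∧ q ≤ c ∧ ∀ r ≤ Kb, b r = b (r + q) := by
    intro Kb
    obtain ⟨s, s', hne, heq⟩ := Fintype.exists_ne_map_eq_of_card_lt
      (fun t : Fin (c + 1) => b (Kb + t)) (by simp; exact hc.symm.le)
    have key : ∀ t t' : Fin (c + 1), (t : ℕ) < (t' : ℕ) → b (Kb + t) = b (Kb + t') →
        ∃ q, 1 ≤ q ∧ q ≤ c ∧ ∀ r ≤ Kb, b r = b (r + q) := by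
      intro t t' hlt heq
      refine ⟨t'.val - t.val, by omega, by have := t'.isLt; omega, ?_⟩
      intro r hr
      have e1 : b r = f^[Kb + t.val - r] (b (Kb + t.val)) := by
        have h3 := back (Kb + t.val - r) r
        rw [show r + (Kb + t.val - r) = Kb + t.val by omega] at h3
        exact h3
      have e2 : b (r + (t'.val - t.val)) = f^[Kb + t.val - r] (b (Kb + t'.val)) := by
        have h3 := back (Kb + t.val - r) (r + (t'.val - t.val))
        rw [show r + (t'.val - t.val) + (Kb + t.val - r) = Kb + t'.val by omega] at h3
        exact h3
      rw [e1, e2, heq]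
    rcases Ne.lt_or_gt hne with hlt | hlt
    · exact key s s' (Fin.lt_def.mp hlt) heq
    · exact key s' s (Fin.lt_def.mp hlt) heq.symm
  obtain ⟨q, hq1, hqc, hper⟩ := period_upto (k + c.factorial)
  have hdvd : q ∣ c.factorial := Nat.dvd_factorial hq1 hqc
  have main : ∀ s, s * q ≤ c.factorial → b k = b (k + s * q) := by
    intro s
    induction s with
    | zero => simp
    | succ s ih =>
      intro hs
      have hmul : (s + 1) * q = s * q + q := by ring
      have h1 : s * q ≤ c.factorial := by omega
      rw [ih h1]
      have h2 := hper (k + s * q) (by omega)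
      rw [show k + s * q + q = k + (s + 1) * q by omega] at h2
      exact h2
  have h4 := main (c.factorial / q) (by rw [Nat.div_mul_cancel hdvd])
  rwa [Nat.div_mul_cancel hdvd] at h4

section Letterwise

variable {σ : Fin (d + 1) → List (Fin (d + 1))}

/-- the letter-to-letter map induced by σ on letters with singleton image (and first
letters in general). -/
def hh (σ : Fin (d + 1) → List (Fin (d + 1))) : Fin (d + 1) → Fin (d + 1) :=
  fun c => (σ c).headI

lemma flat_of_len_eq (hσ : ∀ a, σ a ≠ []) :
    ∀ w : List (Fin (d + 1)), (Sb σ w).length = w.length → ∀ c ∈ w, (σ c).length = 1 := by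
  intro w
  induction w with
  | nil => intro _ c hc; simp at hc
  | cons a t ih =>
    intro hlen c hc
    have e : Sb σ (a :: t) = σ a ++ Sb σ t := by simp [Sb]
    rw [e, List.length_append, List.length_cons] at hlen
    have h1 : 1 ≤ (σ a).length := List.length_pos_iff.mpr (hσ a)
    have h2 : t.length ≤ (Sb σ t).length := length_le_Sb hσ t
    rcases List.mem_cons.mp hc with rfl | hc'
    · omega
    · exact ih (by omega) c hc'

lemma Sb_eq_map_h : ∀ w : List (Fin (d + 1)), (∀ c ∈ w, (σ c).length = 1) →
    Sb σ w = w.map (hh σ) := by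
  intro w
  induction w with
  | nil => intro _; simp [Sb]
  | cons a t ih =>
    intro hflat
    have e : Sb σ (a :: t) = σ a ++ Sb σ t := by simp [Sb]
    obtain ⟨x, hx⟩ := List.length_eq_one_iff.mp (hflat a (by simp))
    rw [e, ih (fun c hc => hflat c (by simp [hc])), hx]
    simp [hh, hx]

lemma len_succ_of_mem (hσ : ∀ a, σ a ≠ []) {x : Fin (d + 1)} {w : List (Fin (d + 1))}
    (hx : x ∈ w) (h2 : 2 ≤ (σ x).length) : w.length + 1 ≤ (Sb σ w).length := by
  obtain ⟨s, t, rfl⟩ := List.append_of_mem hx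
  have e : Sb σ (s ++ x :: t) = Sb σ s ++ (σ x ++ Sb σ t) := by
    rw [show s ++ x :: t = s ++ ([x] ++ t) by simp, Sb_append, Sb_append, Sb_singleton]
  rw [e]
  have h3 := length_le_Sb hσ s
  have h4 := length_le_Sb hσ t
  simp only [List.length_append, List.length_cons]
  omega

lemma range_map_inj {f g : ℕ → Fin (d + 1)} {n : ℕ}
    (e : (List.range n).map f = (List.range n).map g) : ∀ i < n, f i = g i := by
  intro i hi
  have h1 : i < ((List.range n).map f).length := by simp [hi]
  have := List.getElem_of_eq e h1
  simpa using this

end Letterwise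

section Main

variable {u : ℕ → ℕ → Fin (d + 1)}
variable (hσ : ∀ a, σ a ≠ [])
variable (hu : ∀ k n : ℕ, IsPrefixOf (((List.range n).map (u (k + 1))).flatMap σ) (u k))

include hσ hu

lemma letter_step (k n : ℕ) (hflat : ∀ c ∈ pre u (k + 1) n, (σ c).length = 1) :
    ∀ i < n, u k i = hh σ (u (k + 1) i) := by
  have e := step_pre hu k n
  rw [Sb_eq_map_h _ hflat] at e
  have e2 : (pre u (k + 1) n).map (hh σ) = (List.range n).map (hh σ ∘ u (k + 1)) := by
    rw [pre, List.map_map]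
  have hlen : ((pre u (k + 1) n).map (hh σ)).length = n := by
    rw [List.length_map, pre_length]
  rw [hlen] at e
  rw [e2] at e
  exact range_map_inj e.symm

lemma flat_all (hng : ∀ k i, ¬ grows σ (u k i)) : ∀ k i, (σ (u k i)).length = 1 := by
  by_contra hcon
  push_neg at hcon
  obtain ⟨k, i, hne⟩ := hcon
  have h2 : 2 ≤ (σ (u k i)).length := by
    have := List.length_pos_iff.mpr (hσ (u k i))
    omega
  have H : ∀ j, ∃ i' ≤ i, u k i ∈ (Sb σ)^[j] [u (k + j) i'] := fun j => letter_up hσ hu j k i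
  choose g hg1 hg2 using H
  obtain ⟨c₀, hc₀⟩ := Finite.exists_infinite_fiber (fun j => u (k + j) (g j))
  have hgrow : grows σ c₀ := by
    intro C
    induction C with
    | zero => exact ⟨0, by omega⟩
    | succ C ihC =>
      obtain ⟨n, hn⟩ := ihC
      obtain ⟨j, hjmem, hjn⟩ := (Set.infinite_coe_iff.mp hc₀).exists_gt n
      have hcf : u (k + j) (g j) = c₀ := hjmem
      have hmem : u k i ∈ (Sb σ)^[j] [c₀] := by rw [← hcf]; exact hg2 j
      have hbump : ((Sb σ)^[j] [c₀]).length + 1 ≤ ((Sb σ)^[j + 1] [c₀]).length := by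
        rw [Function.iterate_succ_apply']
        exact len_succ_of_mem hσ hmem h2
      have hmono : ((Sb σ)^[n] [c₀]).length ≤ ((Sb σ)^[j] [c₀]).length :=
        iter_len_mono hσ _ (le_of_lt hjn)
      exact ⟨j + 1, by omega⟩
  obtain ⟨j₀, hj₀⟩ := (Set.infinite_coe_iff.mp hc₀).nonempty
  have : ¬ grows σ c₀ := by
    have := hng (k + j₀) (g j₀)
    rwa [show u (k + j₀) (g j₀) = c₀ from hj₀] at this
  exact this hgrow

/-- Case II: no letter of any `u k` is growing. -/
lemma caseII (hng : ∀ k i, ¬ grows σ (u k i)) :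
    ∀ i, u 0 i = u ((d + 1).factorial) i := by
  intro i
  have hb : ∀ k, u k i = hh σ (u (k + 1) i) := by
    intro k
    exact letter_step hσ hu k (i + 1)
      (fun c hc => by obtain ⟨i', hi', rfl⟩ := mem_pre_iff.mp hc; exact flat_all hσ hu hng _ _)
      i (by omega)
  have := pigeonP (hh σ) (fun k => u k i) hb 0
  simpa using this

lemma final_assembly (p : ℕ) (hper : ∀ i, u 0 i = u p i) (n : ℕ) :
    IsPrefixOf ((fun w : List (Fin (d + 1)) => w.flatMap σ)^[p]
      ((List.range n).map (u 0))) (u 0) := by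
  have e0 : (List.range n).map (u 0) = pre u p n := by
    rw [pre]
    exact List.map_congr_left fun a _ => hper a
  have e1 := chain_pre hu p 0 n
  rw [show (0 : ℕ) + p = p by omega] at e1
  show (Sb σ)^[p] ((List.range n).map (u 0))
      = (List.range (((Sb σ)^[p] ((List.range n).map (u 0))).length)).map (u 0)
  have e0' : (List.range n).map (u 0) = pre u p n := e0
  rw [e0', e1, pre_length]
  rfl

lemma caseI (hg : ∃ k i, grows σ (u k i)) :
    ∃ K, ∀ i, u K i = u (K + (d + 1).factorial) i := by
  classical
  set p := (d + 1).factorial with hp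
  have hp1 : 1 ≤ p := Nat.factorial_pos _
  -- every u k contains a growing letter
  have D : ∀ k, ∃ i, grows σ (u k i) := by
    obtain ⟨k₀, i₀, hg0⟩ := hg
    intro k
    rcases le_or_gt k₀ k with hk | hk
    · obtain ⟨j, rfl⟩ := Nat.exists_eq_add_of_le hk
      obtain ⟨i', _, hmem⟩ := letter_up hσ hu j k₀ i₀
      exact ⟨i', grow_of_mem hσ j hmem hg0⟩
    · have hkj : k + (k₀ - k) = k₀ := by omega
      obtain ⟨M, hM, e⟩ := chain_pre' hσ hu (k₀ - k) k (i₀ + 1)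
      rw [hkj] at e
      have hmem0 : u k₀ i₀ ∈ pre u k₀ (i₀ + 1) := mem_pre_iff.mpr ⟨i₀, by omega, rfl⟩
      have hinf := infix_of_mem (σ := σ) (k₀ - k) hmem0
      have hw' : ∀ C, ∃ n, C ≤ ((Sb σ)^[n] ((Sb σ)^[k₀ - k] [u k₀ i₀])).length := by
        intro C
        obtain ⟨n, hn⟩ := hg0 C
        refine ⟨n, ?_⟩
        have e2 := Function.iterate_add_apply (Sb σ) n (k₀ - k) [u k₀ i₀]
        rw [← e2]
        exact le_trans hn (iter_len_mono hσ _ (by omega))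
      obtain ⟨x, hx, hgx⟩ := exists_grow_letter hσ _ hw'
      have hx2 : x ∈ pre u k M := by rw [← e]; exact hinf.subset hx
      obtain ⟨i'', _, rfl⟩ := mem_pre_iff.mp hx2
      exact ⟨i'', hgx⟩
  -- least growing position
  set mf : ℕ → ℕ := fun k => Nat.find (D k) with hmfdef
  have hmf_spec : ∀ k, grows σ (u k (mf k)) := fun k => Nat.find_spec (D k)
  have hmf_min : ∀ k i, i < mf k → ¬ grows σ (u k i) := fun k i h => Nat.find_min (D k) h
  have hstep : ∀ k, mf (k + 1) ≤ mf k := by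
    intro k
    show mf (k + 1) ≤ Nat.find (D k)
    rw [Nat.le_find_iff]
    intro i hi
    obtain ⟨i', hi', hmem⟩ := letter_up hσ hu 1 k i
    intro hgr
    exact hmf_min (k + 1) i' (by omega) (grow_of_mem hσ 1 hmem hgr)
  have hanti : ∀ t k, mf (k + t) ≤ mf k := by
    intro t
    induction t with
    | zero => intro k; simp
    | succ t ih =>
      intro k
      calc mf (k + (t + 1)) = mf ((k + 1) + t) := by ring_nf
      _ ≤ mf (k + 1) := ih (k + 1)
      _ ≤ mf k := hstep k
  -- stabilization point K
  have hKex : ∃ K, ∀ k, K ≤ k → mf k = mf K := by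
    have hne : (Set.range mf).Nonempty := ⟨mf 0, 0, rfl⟩
    obtain ⟨K, hK⟩ := Nat.sInf_mem hne
    refine ⟨K, fun k hk => ?_⟩
    obtain ⟨t, rfl⟩ := Nat.exists_eq_add_of_le hk
    have h1 : mf (K + t) ≤ mf K := hanti t K
    have h2 : sInf (Set.range mf) ≤ mf (K + t) := Nat.sInf_le ⟨K + t, rfl⟩
    omega
  obtain ⟨K, hconst⟩ := hKex
  set m := mf K with hmdef
  have hgrow_m : ∀ k, K ≤ k → grows σ (u k m) := by
    intro k hk
    have := hmf_spec k
    rwa [hconst k hk] at this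
  have hnotgrow : ∀ k, K ≤ k → ∀ i < m, ¬ grows σ (u k i) := by
    intro k hk i hi
    exact hmf_min k i (by rw [hconst k hk]; omega)
  -- alignment
  have halign : ∀ k, K ≤ k → Sb σ (pre u (k + 1) m) = pre u k m := by
    intro k hk
    have e := step_pre hu k m
    have hMm : m ≤ (Sb σ (pre u (k + 1) m)).length := by
      have := length_le_Sb hσ (pre u (k + 1) m)
      rwa [pre_length] at this
    rcases eq_or_lt_of_le hMm with heq | hlt
    · rw [e, ← heq]
    · exfalso
      have hmem : u k m ∈ Sb σ (pre u (k + 1) m) := by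
        rw [e]; exact mem_pre_iff.mpr ⟨m, hlt, rfl⟩
      have hmem' : u k m ∈ (Sb σ)^[1] (pre u (k + 1) m) := by simpa using hmem
      obtain ⟨c, hc, hxc⟩ := mem_letter 1 hmem'
      obtain ⟨i', hi', rfl⟩ := mem_pre_iff.mp hc
      exact hnotgrow (k + 1) (by omega) i' hi'
        (grow_of_mem hσ 1 hxc (hgrow_m k hk))
  -- flatness of the bounded prefix
  have hflat : ∀ k, K ≤ k → ∀ c ∈ pre u (k + 1) m, (σ c).length = 1 := by
    intro k hk
    apply flat_of_len_eq hσ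
    rw [halign k hk, pre_length, pre_length]
  have hlsm : ∀ k, K ≤ k → ∀ i < m, u k i = hh σ (u (k + 1) i) :=
    fun k hk => letter_step hσ hu k m (hflat k hk)
  -- position m
  have hlm : ∀ k, K ≤ k → u k m = hh σ (u (k + 1) m) := by
    intro k hk
    have e := step_pre hu k (m + 1)
    rw [pre_succ, Sb_append, Sb_singleton, halign k hk] at e
    obtain ⟨a, t, hat⟩ := List.exists_cons_of_ne_nil (hσ (u (k + 1) m))
    rw [hat] at e
    have hlen : (pre u k m ++ a :: t).length = m + (t.length + 1) := by
      simp [pre_length]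
    have hum : u k m = a := by
      have h1 := pre_getD (u := u) k
        (show m < (pre u k m ++ a :: t).length by omega)
      rw [← e] at h1
      rw [List.getD_append_right _ _ _ _ (by rw [pre_length])] at h1
      rw [pre_length] at h1
      simpa using h1.symm
    rw [hum, hh, hat]
    rfl
  -- period for positions ≤ m
  have perA : ∀ i ≤ m, ∀ k, K ≤ k → u k i = u (k + p) i := by
    intro i hi k hk
    obtain ⟨j, rfl⟩ := Nat.exists_eq_add_of_le hk
    have hb : ∀ j', u (K + j') i = hh σ (u (K + j' + 1) i) := by
      intro j'
      rcases eq_or_lt_of_le hi with rfl | hlt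
      · exact hlm (K + j') (by omega)
      · exact hlsm (K + j') (by omega) i hlt
    have hpg := pigeonP (hh σ) (fun j' => u (K + j') i) (fun j' => hb j') j
    simp only [Fintype.card_fin] at hpg
    rw [show K + j + p = K + (j + p) by omega]
    exact hpg
  have perA_mul : ∀ t k, K ≤ k → u k m = u (k + t * p) m := by
    intro t
    induction t with
    | zero => intro k hk; simp
    | succ t ih =>
      intro k hk
      rw [ih k hk]
      have h2 := perA m le_rfl (k + t * p) (by omega)
      rw [show k + t * p + p = k + (t + 1) * p by ring] at h2
      exact h2
  -- expansion of the prefix of length m+1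
  have E : ∀ j k, K ≤ k →
      (Sb σ)^[j] (pre u (k + j) (m + 1)) = pre u k m ++ (Sb σ)^[j] [u (k + j) m] := by
    intro j
    induction j with
    | zero => intro k hk; simpa using pre_succ k m
    | succ j ih =>
      intro k hk
      have e1 : (Sb σ)^[j + 1] (pre u (k + (j + 1)) (m + 1))
          = Sb σ ((Sb σ)^[j] (pre u ((k + 1) + j) (m + 1))) := by
        rw [Function.iterate_succ_apply']
        ring_nf
      rw [e1, ih (k + 1) (by omega), Sb_append, halign k hk]
      congr 1
      rw [← Function.iterate_succ_apply' (Sb σ) j]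
      have : (k + 1) + j = k + (j + 1) := by omega
      rw [this]
  -- period for positions beyond m
  have perB : ∀ i k, K ≤ k → u k (m + i) = u (k + p) (m + i) := by
    intro i k hk
    obtain ⟨n, hn⟩ := hgrow_m k hk (i + 1)
    set j := n * p with hj
    have hjn : n ≤ j := by
      calc n = n * 1 := by ring
      _ ≤ n * p := Nat.mul_le_mul_left n hp1
    have hl1 : u (k + j) m = u k m := (perA_mul n k hk).symm
    have hl2 : u ((k + p) + j) m = u k m := by
      have h2 := perA_mul (n + 1) k hk
      rw [show k + (n + 1) * p = (k + p) + j by ring] at h2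
      exact h2.symm
    have hWlen : i < ((Sb σ)^[j] [u k m]).length :=
      lt_of_lt_of_le hn (iter_len_mono hσ _ hjn)
    have key : ∀ k', K ≤ k' → u (k' + j) m = u k m → u k' (m + i) = ((Sb σ)^[j] [u k m]).getD i 0 := by
      intro k' hk' hletter
      have e1 := E j k' hk'
      rw [hletter] at e1
      obtain ⟨M, hM, e2⟩ := chain_pre' hσ hu j k' (m + 1)
      rw [e2] at e1
      have hMlen : M = m + ((Sb σ)^[j] [u k m]).length := by
        have := congrArg List.length e1
        rwa [pre_length, List.length_append, pre_length] at this
      have h1 := pre_getD (u := u) k' (show m + i < M by omega)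
      rw [e1] at h1
      rw [List.getD_append_right _ _ _ _ (by rw [pre_length]; omega)] at h1
      rw [pre_length, show m + i - m = i by omega] at h1
      exact h1.symm
    rw [key k hk hl1, key (k + p) (by omega) hl2]
  refine ⟨K, fun i => ?_⟩
  rcases le_or_gt i m with him | him
  · exact perA i him K le_rfl
  · have := perB (i - m) K le_rfl
    rwa [show m + (i - m) = i by omega] at this

end Main

end PeriodicPointAux

/-- If `u = (u_k)` is a sequence of infinite words with `σ(u_{k+1}) = u_k` for every
`k` (a fixed point of the constant directive sequence `σ^ω`), then `u_0` is a periodic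
point of `σ`: `σ^p(u_0) = u_0` for some `p ≥ 1`. -/
theorem fixed_point_of_constant_sequence_is_periodic_point {d : ℕ} (hd : 1 ≤ d)
    (σ : Fin (d + 1) → List (Fin (d + 1))) (hσ : ∀ a, σ a ≠ [])
    (u : ℕ → ℕ → Fin (d + 1))
    (hu : ∀ k n : ℕ, IsPrefixOf (((List.range n).map (u (k + 1))).flatMap σ) (u k)) :
    ∃ p : ℕ, 1 ≤ p ∧ ∀ n : ℕ,
      IsPrefixOf ((fun w : List (Fin (d + 1)) => w.flatMap σ)^[p]
        ((List.range n).map (u 0))) (u 0) := by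
  classical
  refine ⟨(d + 1).factorial, Nat.factorial_pos _, ?_⟩
  by_cases hg : ∃ k i, grows σ (u k i)
  · obtain ⟨K, hK⟩ := caseI hσ hu hg
    have hper : ∀ i, u 0 i = u ((d + 1).factorial) i := by
      apply determine hσ hu K 0 ((d + 1).factorial)
      intro i
      rw [show (0 : ℕ) + K = K by omega, show (d + 1).factorial + K = K + (d + 1).factorial by omega]
      exact hK i
    exact fun n => final_assembly hσ hu _ hper n
  · push_neg at hg
    exact fun n => final_assembly hσ hu _ (caseII hσ hu hg) n
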